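/- For every integer n ≥ 4 and any two vertices u, v of the n-dimensional bubble-sort star graph BS_n lying in distinct bipartition classes (i.e. u and v are permutations of opposite parity), there exists a Hamiltonian path of BS_n from u to v. -/

import Mathlib

/-- The generating relation of the bubble-sort star graph: `u = v ∘ ⟨1,i⟩` for some
`i ∈ [2,n]` (0-based: swap of positions `0` and `i` with `i ≠ 0`), or `u = v ∘ ⟨i-1,i⟩`
for some `i ∈ [3,n]` (0-based: swap of consecutive positions `i, j = i+1` with `i ≥ 1`). -/
def bssRel (n : ℕ) (u v : Equiv.Perm (Fin n)) : Prop :=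
  (∃ i : Fin n, (i : ℕ) ≠ 0 ∧ u = v * Equiv.swap ⟨0, i.pos⟩ i) ∨
  (∃ i j : Fin n, (i : ℕ) + 1 = (j : ℕ) ∧ 1 ≤ (i : ℕ) ∧ u = v * Equiv.swap i j)

/-- The `n`-dimensional bubble-sort star graph `BS_n`, on the permutations of `{1,…,n}`. -/
def BS (n : ℕ) : SimpleGraph (Equiv.Perm (Fin n)) := SimpleGraph.fromRel (bssRel n)

/-- A set of edges `M` is a perfect matching of `G`: `M` consists of edges of `G` and
every vertex lies in exactly one edge of `M`. -/
def IsPM {V : Type*} (G : SimpleGraph V) (M : Set (Sym2 V)) : Prop :=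
  M ⊆ G.edgeSet ∧ ∀ v : V, ∃! e : Sym2 V, e ∈ M ∧ v ∈ e

/-- A set of edges `M` is an almost-perfect matching of `G`: there is exactly one
vertex lying in no edge of `M`, and every other vertex lies in exactly one edge of `M`. -/
def IsAPM {V : Type*} (G : SimpleGraph V) (M : Set (Sym2 V)) : Prop :=
  M ⊆ G.edgeSet ∧ ∃ w : V, (∀ e ∈ M, w ∉ e) ∧ ∀ v : V, v ≠ w → ∃! e : Sym2 V, e ∈ M ∧ v ∈ e

/-- `G` has neither a perfect matching nor an almost-perfect matching. -/
def HasNoMatchings {V : Type*} (G : SimpleGraph V) : Prop :=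
  (¬ ∃ M, IsPM G M) ∧ (¬ ∃ M, IsAPM G M)

/-- `(S, F)` is a strong matching preclusion set of `G`: deleting the vertices of `S`
(with all incident edges) and the edges of `F` leaves a graph with neither a perfect
matching nor an almost-perfect matching. -/
def IsSMPSet {V : Type*} (G : SimpleGraph V) (S : Set V) (F : Set (Sym2 V)) : Prop :=
  F ⊆ G.edgeSet ∧ HasNoMatchings ((G.deleteEdges F).induce (Sᶜ : Set V))

/-- `F` is a matching preclusion set of `G`: `G - F` has neither a perfect matching
nor an almost-perfect matching. -/
def IsMPSet {V : Type*} (G : SimpleGraph V) (F : Set (Sym2 V)) : Prop :=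
  F ⊆ G.edgeSet ∧ HasNoMatchings (G.deleteEdges F)

/-- `BS_n^i`: the set of permutations whose last entry equals `i`. -/
def BSslice {n : ℕ} (i : Fin n) : Set (Equiv.Perm (Fin n)) :=
  {a | a ⟨n - 1, Nat.sub_lt i.pos Nat.one_pos⟩ = i}

/-- `(V₁, V₂)` is a bipartition of `G`: the two classes partition the vertices and every
edge has one end in each class. -/
def Bipartition {V : Type*} (G : SimpleGraph V) (V1 V2 : Set V) : Prop :=
  Disjoint V1 V2 ∧ V1 ∪ V2 = Set.univ ∧
    ∀ ⦃u v⦄, G.Adj u v → (u ∈ V1 ∧ v ∈ V2) ∨ (u ∈ V2 ∧ v ∈ V1)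

namespace BSH

instance (n : ℕ) : DecidableRel (bssRel n) := fun _ _ => inferInstanceAs (Decidable (_ ∨ _))
instance (n : ℕ) : DecidableRel (BS n).Adj := fun u v =>
  inferInstanceAs (Decidable (u ≠ v ∧ (bssRel n u v ∨ bssRel n v u)))

variable {n : ℕ}

lemma bssRel_swap {u v : Equiv.Perm (Fin n)} (h : bssRel n u v) :
    ∃ a b : Fin n, a ≠ b ∧ u = v * Equiv.swap a b := by
  rcases h with ⟨i, hi, he⟩ | ⟨i, j, hij, h1, he⟩
  · exact ⟨_, _, ⟨fun hh => hi (by simpa using congrArg Fin.val hh.symm), he⟩⟩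
  · exact ⟨_, _, ⟨fun hh => by rw [hh] at hij; omega, he⟩⟩

lemma bssRel_symm {u v : Equiv.Perm (Fin n)} (h : bssRel n u v) : bssRel n v u := by
  rcases h with ⟨i, hi, he⟩ | ⟨i, j, hij, h1, he⟩
  · exact Or.inl ⟨i, hi, by rw [he, mul_assoc, Equiv.swap_mul_self, mul_one]⟩
  · exact Or.inr ⟨i, j, hij, h1, by rw [he, mul_assoc, Equiv.swap_mul_self, mul_one]⟩

lemma bssRel_ne {u v : Equiv.Perm (Fin n)} (h : bssRel n u v) : u ≠ v := by
  obtain ⟨a, b, hab, he⟩ := bssRel_swap h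
  intro huv
  have : Equiv.swap a b = 1 := by
    calc Equiv.swap a b = v⁻¹ * (v * Equiv.swap a b) := by group
    _ = v⁻¹ * v := by rw [← he, huv]
    _ = 1 := by group
  exact hab (Equiv.swap_eq_one_iff.mp this)

lemma adj_iff {u v : Equiv.Perm (Fin n)} : (BS n).Adj u v ↔ bssRel n u v := by
  constructor
  · rintro ⟨hne, h | h⟩
    · exact h
    · exact bssRel_symm h
  · intro h; exact ⟨bssRel_ne h, Or.inl h⟩

lemma adj_sign {u v : Equiv.Perm (Fin n)} (h : (BS n).Adj u v) :
    Equiv.Perm.sign u = - Equiv.Perm.sign v := by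
  obtain ⟨a, b, hab, he⟩ := bssRel_swap (adj_iff.mp h)
  rw [he, Equiv.Perm.sign_mul, Equiv.Perm.sign_swap hab, mul_neg, mul_one]

lemma units_ne_neg (s : ℤˣ) : -s ≠ s := by
  rcases Int.units_eq_one_or s with rfl | rfl <;> decide

lemma units_eq_neg_of_ne {s t : ℤˣ} (h : s ≠ t) : t = -s := by
  rcases Int.units_eq_one_or s with rfl | rfl <;> rcases Int.units_eq_one_or t with rfl | rfl <;>
    simp_all

end BSH
namespace BSH
variable {n : ℕ}

/-- Extend a permutation of `Fin n` to `Fin (n+1)` fixing the last element. -/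
def ext (σ : Equiv.Perm (Fin n)) : Equiv.Perm (Fin (n + 1)) :=
  Equiv.permCongr finSuccEquivLast.symm σ.optionCongr

@[simp] lemma ext_castSucc (σ : Equiv.Perm (Fin n)) (i : Fin n) :
    ext σ (Fin.castSucc i) = Fin.castSucc (σ i) := by
  simp [ext, Equiv.permCongr_apply]

@[simp] lemma ext_last (σ : Equiv.Perm (Fin n)) : ext σ (Fin.last n) = Fin.last n := by
  simp [ext, Equiv.permCongr_apply]

lemma ext_mul (σ τ : Equiv.Perm (Fin n)) : ext (σ * τ) = ext σ * ext τ := by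
  apply Equiv.ext; intro x
  induction x using Fin.lastCases with
  | last => simp [Equiv.Perm.mul_apply]
  | cast i => simp [Equiv.Perm.mul_apply]

lemma ext_swap (a b : Fin n) :
    ext (Equiv.swap a b) = Equiv.swap (Fin.castSucc a) (Fin.castSucc b) := by
  apply Equiv.ext; intro x
  induction x using Fin.lastCases with
  | last =>
    rw [ext_last, Equiv.swap_apply_of_ne_of_ne]
    · exact (Fin.castSucc_lt_last a).ne'
    · exact (Fin.castSucc_lt_last b).ne'
  | cast i =>
    rw [ext_castSucc, Fin.castSucc_injective n |>.swap_apply]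

lemma sign_ext (σ : Equiv.Perm (Fin n)) : Equiv.Perm.sign (ext σ) = Equiv.Perm.sign σ := by
  rw [show ext σ = (finSuccEquivLast.symm.symm.trans σ.optionCongr).trans finSuccEquivLast.symm
      from rfl]
  rw [Equiv.Perm.sign_symm_trans_trans, Equiv.optionCongr_sign]

lemma ext_injective : Function.Injective (ext (n := n)) := by
  intro σ τ h
  apply Equiv.ext; intro i
  have := congrArg (· (Fin.castSucc i)) h
  simpa [Fin.castSucc_injective n |>.eq_iff] using this

lemma ext_of_fix {τ : Equiv.Perm (Fin (n + 1))} (h : τ (Fin.last n) = Fin.last n) :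
    ∃ σ, ext σ = τ := by
  set p : Equiv.Perm (Option (Fin n)) := Equiv.permCongr finSuccEquivLast τ with hp
  have hpn : p none = none := by
    simp [hp, Equiv.permCongr_apply, h]
  refine ⟨p.removeNone, ?_⟩
  have hoc : Equiv.optionCongr p.removeNone = p := by
    apply Equiv.ext; intro x
    cases x with
    | none => simp [hpn]
    | some a =>
      have hne : p (some a) ≠ none := by
        intro hcon
        exact (Option.some_ne_none a) (p.injective (hcon.trans hpn.symm))
      obtain ⟨b, hb⟩ := Option.ne_none_iff_exists'.mp hne
      simp only [Equiv.optionCongr_apply, Option.map_some]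
      exact (Equiv.removeNone_some p ⟨b, hb⟩)
  show Equiv.permCongr finSuccEquivLast.symm (Equiv.optionCongr p.removeNone) = τ
  rw [hoc, hp]
  apply Equiv.ext; intro x
  simp [Equiv.permCongr_apply]

/-- Map `Perm (Fin n)` onto the slice of `Perm (Fin (n+1))` of elements sending `last` to `c`. -/
def emb (c : Fin (n + 1)) (σ : Equiv.Perm (Fin n)) : Equiv.Perm (Fin (n + 1)) :=
  Equiv.swap (Fin.last n) c * ext σ

lemma emb_last (c : Fin (n + 1)) (σ : Equiv.Perm (Fin n)) : emb c σ (Fin.last n) = c := by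
  simp [emb, Equiv.Perm.mul_apply]

lemma emb_injective (c : Fin (n + 1)) : Function.Injective (emb c) :=
  fun σ τ h => ext_injective (mul_left_cancel h)

lemma emb_surj {c : Fin (n + 1)} {a : Equiv.Perm (Fin (n + 1))} (h : a (Fin.last n) = c) :
    ∃ σ, emb c σ = a := by
  have : (Equiv.swap (Fin.last n) c * a) (Fin.last n) = Fin.last n := by
    simp [Equiv.Perm.mul_apply, h]
  obtain ⟨σ, hσ⟩ := ext_of_fix this
  refine ⟨σ, ?_⟩
  rw [emb, hσ, ← mul_assoc, Equiv.swap_mul_self, one_mul]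

lemma sign_emb (c : Fin (n + 1)) (σ : Equiv.Perm (Fin n)) :
    Equiv.Perm.sign (emb c σ) = Equiv.Perm.sign (Equiv.swap (Fin.last n) c) *
      Equiv.Perm.sign σ := by
  rw [emb, Equiv.Perm.sign_mul, sign_ext]

lemma emb_adj (c : Fin (n + 1)) {σ τ : Equiv.Perm (Fin n)} (h : (BS n).Adj σ τ) :
    (BS (n + 1)).Adj (emb c σ) (emb c τ) := by
  rw [adj_iff] at h ⊢
  rcases h with ⟨i, hi, he⟩ | ⟨i, j, hij, h1, he⟩
  · left
    refine ⟨Fin.castSucc i, by simpa using hi, ?_⟩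
    have h0 : (⟨0, (Fin.castSucc i).pos⟩ : Fin (n + 1)) = Fin.castSucc ⟨0, i.pos⟩ := rfl
    rw [emb, emb, he, ext_mul, ext_swap, h0, mul_assoc]
  · right
    refine ⟨Fin.castSucc i, Fin.castSucc j, by simpa using hij, by simpa using h1, ?_⟩
    rw [emb, emb, he, ext_mul, ext_swap, mul_assoc]

end BSH
namespace BSH
open List

/-- `l` is a Hamiltonian path of the set `s` in `G`, from `u` to `v`. -/
def HL {V : Type*} (G : SimpleGraph V) (s : Set V) (u v : V) (l : List V) : Prop :=
  l.Chain' G.Adj ∧ l.Nodup ∧ (∀ x, x ∈ l ↔ x ∈ s) ∧ l.head? = some u ∧ l.getLast? = some v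

variable {V : Type*} {G : SimpleGraph V} {s t : Set V} {u v x y : V} {l l₁ l₂ : List V}

lemma HL.ne_nil (h : HL G s u v l) : l ≠ [] := by
  rintro rfl; simpa using h.2.2.2.1

lemma HL.congr (h : HL G s u v l) (hst : ∀ x, x ∈ s ↔ x ∈ t) : HL G t u v l :=
  ⟨h.1, h.2.1, fun z => (h.2.2.1 z).trans (hst z), h.2.2.2⟩

lemma HL.glue (h₁ : HL G s u x l₁) (h₂ : HL G t y v l₂) (hst : Disjoint s t)
    (hadj : G.Adj x y) : HL G (s ∪ t) u v (l₁ ++ l₂) := by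
  obtain ⟨c₁, n₁, m₁, hh₁, hl₁⟩ := h₁
  obtain ⟨c₂, n₂, m₂, hh₂, hl₂⟩ := h₂
  refine ⟨?_, ?_, ?_, ?_, ?_⟩
  · show List.IsChain _ _
    rw [List.isChain_append]
    refine ⟨c₁, c₂, ?_⟩
    intro a ha b hb
    rw [Option.mem_def, hl₁, Option.some_inj] at ha
    rw [Option.mem_def, hh₂, Option.some_inj] at hb
    subst ha; subst hb; exact hadj
  · refine n₁.append n₂ ?_
    intro a ha hb
    exact Set.disjoint_left.mp hst ((m₁ a).mp ha) ((m₂ a).mp hb)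
  · intro z; simp [List.mem_append, m₁ z, m₂ z]
  · rcases l₁ with _ | ⟨a, t₁⟩
    · simpa using hh₁
    · simpa using hh₁
  · rw [List.getLast?_append_of_ne_nil]
    · exact hl₂
    · rintro rfl; simpa using hl₂

/-- Convert a Hamiltonian list into a walk. -/
lemma walk_of_list {V : Type*} {G : SimpleGraph V} :
    ∀ (l : List V) (u v : V), l.Chain' G.Adj → l.head? = some u → l.getLast? = some v →
      ∃ p : G.Walk u v, p.support = l := by
  intro l
  induction l with
  | nil => intro u v _ h; simp at h
  | cons a tl ih =>
    intro u v hc hh hlast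
    rw [List.head?_cons, Option.some_inj] at hh
    subst hh
    rcases tl with _ | ⟨b, tl'⟩
    · rw [List.getLast?_singleton, Option.some_inj] at hlast
      subst hlast
      exact ⟨SimpleGraph.Walk.nil, rfl⟩
    · change List.IsChain _ _ at hc
      rw [List.isChain_cons_cons] at hc
      have hlast' : (b :: tl').getLast? = some v := by
        rw [← hlast]; rfl
      obtain ⟨q, hq⟩ := ih b v hc.2 rfl hlast'
      exact ⟨SimpleGraph.Walk.cons hc.1 q, by simp [hq]⟩

lemma ham_of_HL {V : Type*} [DecidableEq V] {G : SimpleGraph V} {u v : V} {l : List V}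
    (h : HL G Set.univ u v l) : ∃ p : G.Walk u v, p.IsHamiltonian := by
  obtain ⟨p, hp⟩ := walk_of_list l u v h.1 h.2.2.2.1 h.2.2.2.2
  refine ⟨p, fun z => ?_⟩
  rw [hp]
  exact List.count_eq_one_of_mem h.2.1 ((h.2.2.1 z).mpr (Set.mem_univ z))

lemma chainB_aux {α : Type*} (f : α → α → Bool) (R : α → α → Prop)
    (h : ∀ a b, f a b = true → R a b) : ∀ l : List α,
    List.Chain' (fun a b => f a b = true) l → List.Chain' R l := by
  intro l hl
  exact List.IsChain.imp (fun a b => h a b) hl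

end BSH
namespace BSH
open List Equiv Equiv.Perm
variable {n : ℕ}

/-- The Hamiltonian-laceability property of `BS n`. -/
def Ham (n : ℕ) : Prop :=
  ∀ u v : Equiv.Perm (Fin n), Equiv.Perm.sign u ≠ Equiv.Perm.sign v →
    ∃ l, HL (BS n) Set.univ u v l

lemma adj_mul_left {g u v : Equiv.Perm (Fin n)} (h : (BS n).Adj u v) :
    (BS n).Adj (g * u) (g * v) := by
  rw [adj_iff] at h ⊢
  rcases h with ⟨i, hi, he⟩ | ⟨i, j, hij, h1, he⟩
  · exact Or.inl ⟨i, hi, by rw [he, mul_assoc]⟩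
  · exact Or.inr ⟨i, j, hij, h1, by rw [he, mul_assoc]⟩

lemma HL.translate {g u v : Equiv.Perm (Fin n)} {l : List (Equiv.Perm (Fin n))}
    (h : HL (BS n) Set.univ u v l) :
    HL (BS n) Set.univ (g * u) (g * v) (l.map (g * ·)) := by
  obtain ⟨c₁, n₁, m₁, hh₁, hl₁⟩ := h
  refine ⟨?_, ?_, ?_, ?_, ?_⟩
  · show List.IsChain _ _
    rw [List.isChain_map]
    exact List.IsChain.imp (fun a b hab => adj_mul_left hab) c₁
  · exact n₁.map (fun a b hab => mul_left_cancel hab)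
  · intro z
    simp only [List.mem_map, Set.mem_univ, iff_true]
    exact ⟨g⁻¹ * z, (m₁ _).mpr (Set.mem_univ _), by group⟩
  · rw [List.head?_map, hh₁]; rfl
  · rw [List.getLast?_map, hl₁]; rfl

lemma sliceHam (IH : Ham n) (c : Fin (n + 1)) (u v : Equiv.Perm (Fin (n + 1)))
    (hu : u (Fin.last n) = c) (hv : v (Fin.last n) = c)
    (hs : Equiv.Perm.sign u ≠ Equiv.Perm.sign v) :
    ∃ l, HL (BS (n + 1)) {a | a (Fin.last n) = c} u v l := by
  obtain ⟨σ, rfl⟩ := emb_surj hu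
  obtain ⟨τ, rfl⟩ := emb_surj hv
  have hστ : Equiv.Perm.sign σ ≠ Equiv.Perm.sign τ := by
    intro hcon
    exact hs (by rw [sign_emb, sign_emb, hcon])
  obtain ⟨l₀, c₁, n₁, m₁, hh₁, hl₁⟩ := IH σ τ hστ
  refine ⟨l₀.map (emb c), ?_, ?_, ?_, ?_, ?_⟩
  · show List.IsChain _ _
    rw [List.isChain_map]
    exact List.IsChain.imp (fun a b hab => emb_adj c hab) c₁
  · exact n₁.map (emb_injective c)
  · intro z
    simp only [List.mem_map, Set.mem_setOf_eq]
    constructor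
    · rintro ⟨σ', _, rfl⟩; exact emb_last c σ'
    · intro hz
      obtain ⟨σ', rfl⟩ := emb_surj hz
      exact ⟨σ', (m₁ σ').mpr (Set.mem_univ _), rfl⟩
  · rw [List.head?_map, hh₁]; rfl
  · rw [List.getLast?_map, hl₁]; rfl

lemma exit_exists (h4 : 4 ≤ n) (c d : Fin (n + 1)) (hcd : c ≠ d) (ε : ℤˣ) :
    ∃ z : Equiv.Perm (Fin (n + 1)), z (Fin.last n) = c ∧ z ⟨0, Nat.succ_pos n⟩ = d ∧
      Equiv.Perm.sign z = ε := by
  set p0 : Fin (n + 1) := ⟨0, Nat.succ_pos n⟩ with hp0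
  have hplast : p0 ≠ Fin.last n := by
    intro h; have := congrArg Fin.val h; simp [hp0, Fin.last] at this; omega
  set g' : Equiv.Perm (Fin (n + 1)) := Equiv.setValue (Equiv.refl (Fin (n+1))) p0 d with hg'
  have hg'0 : g' p0 = d := Equiv.setValue_eq (Equiv.refl (Fin (n+1))) p0 d
  set g : Equiv.Perm (Fin (n + 1)) := Equiv.setValue g' (Fin.last n) c with hg
  have hglast : g (Fin.last n) = c := Equiv.setValue_eq g' (Fin.last n) c
  have hg0 : g p0 = d := by
    show g' (Equiv.swap (Fin.last n) (g'.symm c) p0) = d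
    rw [Equiv.swap_apply_of_ne_of_ne hplast, hg'0]
    intro h
    apply hcd
    rw [← hg'0, h, Equiv.apply_symm_apply]
  by_cases hsg : Equiv.Perm.sign g = ε
  · exact ⟨g, hglast, hg0, hsg⟩
  · set q1 : Fin (n + 1) := ⟨1, by omega⟩ with hq1
    set q2 : Fin (n + 1) := ⟨2, by omega⟩ with hq2
    have h12 : q1 ≠ q2 := by
      intro h; have := congrArg Fin.val h; simp [hq1, hq2] at this
    refine ⟨g * Equiv.swap q1 q2, ?_, ?_, ?_⟩
    · rw [Equiv.Perm.mul_apply, Equiv.swap_apply_of_ne_of_ne, hglast] <;>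
        · intro h; have := congrArg Fin.val h; simp [hq1, hq2, Fin.last] at this; omega
    · rw [Equiv.Perm.mul_apply, Equiv.swap_apply_of_ne_of_ne, hg0] <;>
        · intro h; have := congrArg Fin.val h; simp [hp0, hq1, hq2] at this
    · rw [Equiv.Perm.sign_mul, Equiv.Perm.sign_swap h12, units_eq_neg_of_ne hsg]
      simp

lemma adj_cross0 (v : Equiv.Perm (Fin (n + 1))) (hn : 1 ≤ n) :
    (BS (n + 1)).Adj v (v * Equiv.swap ⟨0, Nat.succ_pos n⟩ (Fin.last n)) ∧
      (v * Equiv.swap ⟨0, Nat.succ_pos n⟩ (Fin.last n)) (Fin.last n) =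
        v ⟨0, Nat.succ_pos n⟩ := by
  constructor
  · have : (BS (n + 1)).Adj (v * Equiv.swap ⟨0, Nat.succ_pos n⟩ (Fin.last n)) v := by
      rw [adj_iff]
      exact Or.inl ⟨Fin.last n, by simp [Fin.last]; omega, rfl⟩
    exact this.symm
  · rw [Equiv.Perm.mul_apply, Equiv.swap_apply_right]

lemma adj_crossq (v : Equiv.Perm (Fin (n + 1))) (hn : 2 ≤ n) :
    (BS (n + 1)).Adj v (v * Equiv.swap ⟨n - 1, by omega⟩ (Fin.last n)) ∧
      (v * Equiv.swap ⟨n - 1, by omega⟩ (Fin.last n)) (Fin.last n) =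
        v ⟨n - 1, by omega⟩ := by
  constructor
  · have : (BS (n + 1)).Adj (v * Equiv.swap ⟨n - 1, by omega⟩ (Fin.last n)) v := by
      rw [adj_iff]
      refine Or.inr ⟨⟨n - 1, by omega⟩, Fin.last n, ?_, by simp; omega, rfl⟩
      show (n - 1) + 1 = n
      omega
    exact this.symm
  · rw [Equiv.Perm.mul_apply, Equiv.swap_apply_right]

lemma tour (h4 : 4 ≤ n) (IH : Ham n) :
    ∀ (S : List (Fin (n + 1))), S.Nodup → ∀ (c d : Fin (n + 1))
      (u v : Equiv.Perm (Fin (n + 1))),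
      S.head? = some c → S.getLast? = some d → u (Fin.last n) = c → v (Fin.last n) = d →
      Equiv.Perm.sign u ≠ Equiv.Perm.sign v →
      ∃ l, HL (BS (n + 1)) {a | a (Fin.last n) ∈ S} u v l := by
  intro S
  induction S with
  | nil => intro _ c d u v h; simp at h
  | cons c0 S' ih =>
    intro hnd c d u v hh hlast hu hv hs
    rw [List.head?_cons, Option.some_inj] at hh; subst hh
    rcases S' with _ | ⟨c1, S''⟩
    · rw [List.getLast?_singleton, Option.some_inj] at hlast; subst hlast
      obtain ⟨l, hl⟩ := sliceHam IH c0 u v hu hv hs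
      exact ⟨l, hl.congr (by simp)⟩
    · have hc1 : c0 ≠ c1 := by
        intro h; subst h
        exact (List.nodup_cons.mp hnd).1 List.mem_cons_self
      obtain ⟨z, hz1, hz2, hz3⟩ := exit_exists h4 c0 c1 hc1 (- Equiv.Perm.sign u)
      have hsz : Equiv.Perm.sign u ≠ Equiv.Perm.sign z := by
        rw [hz3]; exact (units_ne_neg _).symm
      obtain ⟨l₁, hl₁⟩ := sliceHam IH c0 u z hu hz1 hsz
      obtain ⟨hadj, hval⟩ := adj_cross0 z (by omega)
      set z' := z * Equiv.swap ⟨0, Nat.succ_pos n⟩ (Fin.last n) with hz'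
      have hz'1 : z' (Fin.last n) = c1 := by rw [hz', hval, hz2]
      have hsz' : Equiv.Perm.sign z' ≠ Equiv.Perm.sign v := by
        have h1 : Equiv.Perm.sign z' = - Equiv.Perm.sign z := adj_sign hadj.symm
        rw [h1, hz3, neg_neg]
        exact hs
      have hnd' : (c1 :: S'').Nodup := (List.nodup_cons.mp hnd).2
      have hlast' : (c1 :: S'').getLast? = some d := by rw [← hlast]; rfl
      obtain ⟨l₂, hl₂⟩ := ih hnd' c1 d z' v rfl hlast' hz'1 hv hsz'
      refine ⟨l₁ ++ l₂, (hl₁.glue hl₂ ?_ hadj).congr ?_⟩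
      · rw [Set.disjoint_left]
        intro a ha hb
        rw [Set.mem_setOf_eq] at ha hb
        rw [ha] at hb
        exact (List.nodup_cons.mp hnd).1 hb
      · intro x
        simp [Set.mem_union, List.mem_cons, or_assoc]

end BSH

namespace BSH
open List Equiv Equiv.Perm
variable {n : ℕ}

lemma buildS (avoid : List (Fin (n + 1))) (c d : Fin (n + 1)) (hcd : c ≠ d)
    (hc : c ∉ avoid) (hd : d ∉ avoid) :
    ∃ S : List (Fin (n + 1)), S.Nodup ∧ S.head? = some c ∧ S.getLast? = some d ∧
      (∀ t, t ∈ S ↔ t ∉ avoid) := by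
  classical
  set mid := (List.finRange (n + 1)).filter
    (fun x => decide (x ≠ c ∧ x ≠ d ∧ x ∉ avoid)) with hmiddef
  have hmid : ∀ x, x ∈ mid ↔ (x ≠ c ∧ x ≠ d ∧ x ∉ avoid) := by
    intro x
    simp [hmiddef, List.mem_filter, List.mem_finRange]
  have hnd : (c :: (mid ++ [d])).Nodup := by
    rw [List.nodup_cons]
    constructor
    · intro h
      rcases List.mem_append.mp h with h | h
      · exact ((hmid c).mp h).1 rfl
      · exact hcd (List.mem_singleton.mp h)
    · refine List.Nodup.append ?_ (List.nodup_singleton d) ?_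
      · exact ((List.nodup_finRange _).filter _)
      · intro x hx hx'
        exact ((hmid x).mp hx).2.1 (List.mem_singleton.mp hx')
  refine ⟨c :: (mid ++ [d]), hnd, rfl, ?_, ?_⟩
  · rw [show c :: (mid ++ [d]) = (c :: mid) ++ [d] from rfl, List.getLast?_concat]
  · intro t
    constructor
    · intro ht
      rcases List.mem_cons.mp ht with rfl | ht
      · exact hc
      · rcases List.mem_append.mp ht with ht | ht
        · exact ((hmid t).mp ht).2.2
        · rw [List.mem_singleton.mp ht]; exact hd
    · intro ht
      by_cases h1 : t = c
      · exact h1 ▸ List.mem_cons_self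
      by_cases h2 : t = d
      · subst h2
        exact List.mem_cons_of_mem _ (List.mem_append.mpr (Or.inr (List.mem_singleton_self _)))
      · exact List.mem_cons_of_mem _ (List.mem_append.mpr (Or.inl ((hmid t).mpr ⟨h1, h2, ht⟩)))

lemma step (h4 : 4 ≤ n) (IH : Ham n) : Ham (n + 1) := by
  intro u v hs
  by_cases hab : u (Fin.last n) = v (Fin.last n)
  swap
  · -- u and v lie in distinct slices: route through all slices in a row
    obtain ⟨S, hnd, hh, hl, hmem⟩ := buildS [] (u (Fin.last n)) (v (Fin.last n)) hab
      (by simp) (by simp)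
    obtain ⟨l, hl'⟩ := tour h4 IH S hnd _ _ u v hh hl rfl rfl hs
    refine ⟨l, hl'.congr ?_⟩
    intro x
    simp [hmem]
  · -- u and v lie in the same slice
    obtain ⟨l, hl⟩ := sliceHam IH (u (Fin.last n)) u v rfl hab.symm hs
    obtain ⟨c₁, n₁, m₁, hh₁, hl₁⟩ := hl
    rcases l with _ | ⟨u0, t⟩
    · simp at hh₁
    have hu0 : u = u0 := by
      have h := hh₁; rw [List.head?_cons, Option.some_inj] at h; exact h.symm
    subst hu0
    rcases t with _ | ⟨y, t'⟩
    · exfalso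
      have : u = v := by simpa using hl₁
      exact hs (by rw [this])
    have hadjuy : (BS (n + 1)).Adj u y := (List.isChain_cons_cons.mp c₁).1
    have hyL : y (Fin.last n) = u (Fin.last n) := by
      have hmem : y ∈ u :: y :: t' := by simp
      exact (m₁ y).mp hmem
    set p0 : Fin (n + 1) := ⟨0, Nat.succ_pos n⟩ with hp0def
    set pq : Fin (n + 1) := ⟨n - 1, by omega⟩ with hpqdef
    have hp0q : p0 ≠ pq := by
      intro h; have := congrArg Fin.val h; simp [hp0def, hpqdef] at this; omega
    have hp0L : p0 ≠ Fin.last n := by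
      intro h; have := congrArg Fin.val h; simp [hp0def, Fin.last] at this; omega
    have hpqL : pq ≠ Fin.last n := by
      intro h; have := congrArg Fin.val h; simp [hpqdef, Fin.last] at this; omega
    obtain ⟨hadj_u0, hval_u0⟩ := adj_cross0 u (by omega)
    obtain ⟨hadj_y0, hval_y0⟩ := adj_cross0 y (by omega)
    obtain ⟨hadj_yq, hval_yq⟩ := adj_crossq y (by omega)
    obtain ⟨u', y', c, d, hu'adj, hy'adj, hu'L, hy'L, hcd, hca, hda⟩ :
        ∃ u' y' c d, (BS (n + 1)).Adj u u' ∧ (BS (n + 1)).Adj y y' ∧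
          u' (Fin.last n) = c ∧ y' (Fin.last n) = d ∧ c ≠ d ∧ c ≠ u (Fin.last n) ∧
          d ≠ u (Fin.last n) := by
      by_cases h : u p0 = y p0
      · refine ⟨_, _, u p0, y pq, hadj_u0, hadj_yq, hval_u0, hval_yq, ?_, ?_, ?_⟩
        · rw [h]; exact fun hh => hp0q (y.injective hh)
        · exact fun hh => hp0L (u.injective hh)
        · intro hh; rw [← hyL] at hh; exact hpqL (y.injective hh)
      · refine ⟨_, _, u p0, y p0, hadj_u0, hadj_y0, hval_u0, hval_y0, h,
          fun hh => hp0L (u.injective hh), ?_⟩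
        intro hh; rw [← hyL] at hh; exact hp0L (y.injective hh)
    have hsu' : Equiv.Perm.sign u' = - Equiv.Perm.sign u := adj_sign hu'adj.symm
    have hsy' : Equiv.Perm.sign y' = - Equiv.Perm.sign y := adj_sign hy'adj.symm
    have hsy : Equiv.Perm.sign y = - Equiv.Perm.sign u := adj_sign hadjuy.symm
    have hsu'y' : Equiv.Perm.sign u' ≠ Equiv.Perm.sign y' := by
      rw [hsu', hsy', hsy, neg_neg]
      exact units_ne_neg _
    obtain ⟨S, hnd, hhS, hlS, hmemS⟩ := buildS [u (Fin.last n)] c d hcd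
      (by simpa using hca) (by simpa using hda)
    obtain ⟨lT, hlT⟩ := tour h4 IH S hnd c d u' y' hhS hlS hu'L hy'L hsu'y'
    have P1 : HL (BS (n + 1)) {u} u u [u] :=
      ⟨List.isChain_singleton u, List.nodup_singleton u, by simp, rfl, rfl⟩
    have dis1 : Disjoint ({u} : Set (Equiv.Perm (Fin (n + 1))))
        {a | a (Fin.last n) ∈ S} := by
      rw [Set.disjoint_left]
      rintro a rfl hb
      rw [Set.mem_setOf_eq] at hb
      exact ((hmemS _).mp hb) (List.mem_singleton_self _)
    have P2 := P1.glue hlT dis1 hu'adj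
    have P3 : HL (BS (n + 1)) ({a | a (Fin.last n) = u (Fin.last n)} \ {u}) y v
        (y :: t') := by
      refine ⟨(List.isChain_cons_cons.mp c₁).2, (List.nodup_cons.mp n₁).2, ?_, rfl, ?_⟩
      · intro x
        constructor
        · intro hx
          refine ⟨(m₁ x).mp (List.mem_cons_of_mem _ hx), ?_⟩
          rintro rfl
          exact (List.nodup_cons.mp n₁).1 hx
        · rintro ⟨hx1, hx2⟩
          rcases List.mem_cons.mp ((m₁ x).mpr hx1) with rfl | hx
          · exact absurd rfl hx2
          · exact hx
      · rw [← hl₁]; rfl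
    have dis2 : Disjoint (({u} : Set (Equiv.Perm (Fin (n + 1)))) ∪
        {a | a (Fin.last n) ∈ S}) ({a | a (Fin.last n) = u (Fin.last n)} \ {u}) := by
      rw [Set.disjoint_left]
      rintro a (rfl | ha) hb
      · exact hb.2 rfl
      · rw [Set.mem_setOf_eq] at ha
        have := (hmemS _).mp ha
        rw [hb.1] at this
        exact this (List.mem_singleton_self _)
    have P4 := P2.glue P3 dis2 hy'adj.symm
    refine ⟨_, P4.congr ?_⟩
    intro x
    simp only [Set.mem_union, Set.mem_singleton_iff, Set.mem_setOf_eq, Set.mem_diff,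
      Set.mem_univ, iff_true]
    by_cases hx : x (Fin.last n) = u (Fin.last n)
    · by_cases hxu : x = u
      · exact Or.inl (Or.inl hxu)
      · exact Or.inr ⟨hx, hxu⟩
    · refine Or.inl (Or.inr ?_)
      rw [hmemS]
      simpa using hx

end BSH

namespace BSH
open List Equiv Equiv.Perm

def sw (a b : Fin 4) : Equiv.Perm (Fin 4) := Equiv.swap a b

def chainB {α : Type*} (f : α → α → Bool) : List α → Bool
  | [] => true
  | [_] => true
  | a :: b :: t => f a b && chainB f (b :: t)

lemma chain'_of_chainB {α : Type*} (f : α → α → Bool) (R : α → α → Prop)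
    (h : ∀ a b, f a b = true → R a b) : ∀ l, chainB f l = true → List.Chain' R l
  | [], _ => List.isChain_nil
  | [a], _ => List.isChain_singleton a
  | a :: b :: t, hc => by
    rw [chainB, Bool.and_eq_true] at hc
    show List.IsChain _ _
    rw [List.isChain_cons_cons]
    exact ⟨h _ _ hc.1, chain'_of_chainB f R h (b :: t) hc.2⟩

lemma coverage24 {l : List (Equiv.Perm (Fin 4))} (hn : l.Nodup) (hl : l.length = 24) :
    ∀ x, x ∈ l := by
  intro x
  have h2 : l.toFinset = Finset.univ := by
    apply Finset.eq_univ_of_card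
    rw [List.toFinset_card_of_nodup hn, hl, Fintype.card_perm]
    rfl
  exact List.mem_toFinset.mp (h2 ▸ Finset.mem_univ x)

lemma ofChecks (l : List (Equiv.Perm (Fin 4))) (u v : Equiv.Perm (Fin 4))
    (hc : chainB (fun a b => decide (bssRel 4 a b)) l = true)
    (hnd : l.Nodup) (hlen : l.length = 24)
    (hh : l.head? = some u) (hlast : l.getLast? = some v) :
    HL (BS 4) Set.univ u v l := by
  refine ⟨?_, hnd, fun x => ⟨fun _ => Set.mem_univ x, fun _ => coverage24 hnd hlen x⟩,
    hh, hlast⟩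
  exact chain'_of_chainB _ _ (fun a b hab => adj_iff.mpr (of_decide_eq_true hab)) l hc

-- generated
def bp0 : List (Equiv.Perm (Fin 4)) := [1, sw 0 1, sw 0 1 * sw 0 2, sw 1 2, sw 0 2 * sw 0 1, sw 0 2, sw 0 2 * sw 0 3, sw 0 2 * sw 0 3 * sw 0 1, sw 1 2 * sw 1 3, sw 0 1 * sw 0 2 * sw 0 3, sw 0 1 * sw 2 3, sw 0 1 * sw 0 3 * sw 0 2, sw 1 3 * sw 1 2, sw 0 2 * sw 0 1 * sw 0 3, sw 0 1 * sw 0 3, sw 1 3, sw 0 2 * sw 1 3, sw 0 3 * sw 0 1 * sw 0 2, sw 0 3 * sw 1 2, sw 0 3 * sw 0 2 * sw 0 1, sw 0 3 * sw 0 1, sw 0 3, sw 0 3 * sw 0 2, sw 2 3]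
def bp1 : List (Equiv.Perm (Fin 4)) := [1, sw 0 1, sw 0 1 * sw 0 2, sw 0 1 * sw 0 2 * sw 0 3, sw 1 2 * sw 1 3, sw 0 2 * sw 0 3 * sw 0 1, sw 0 2 * sw 0 3, sw 2 3, sw 0 1 * sw 2 3, sw 0 1 * sw 0 3 * sw 0 2, sw 1 3 * sw 1 2, sw 0 2 * sw 0 1 * sw 0 3, sw 0 1 * sw 0 3, sw 1 3, sw 0 2 * sw 1 3, sw 0 3 * sw 0 1 * sw 0 2, sw 0 3 * sw 1 2, sw 0 3 * sw 0 2 * sw 0 1, sw 0 3 * sw 0 1, sw 0 3, sw 0 3 * sw 0 2, sw 0 2, sw 0 2 * sw 0 1, sw 1 2]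
def bp2 : List (Equiv.Perm (Fin 4)) := [1, sw 0 1, sw 0 1 * sw 0 2, sw 1 2, sw 0 2 * sw 0 1, sw 0 2, sw 0 2 * sw 0 3, sw 0 2 * sw 0 3 * sw 0 1, sw 1 2 * sw 1 3, sw 0 1 * sw 0 2 * sw 0 3, sw 0 1 * sw 2 3, sw 2 3, sw 0 3 * sw 0 2, sw 0 3 * sw 0 2 * sw 0 1, sw 0 3 * sw 1 2, sw 0 3, sw 0 3 * sw 0 1, sw 0 3 * sw 0 1 * sw 0 2, sw 0 2 * sw 1 3, sw 0 2 * sw 0 1 * sw 0 3, sw 1 3 * sw 1 2, sw 0 1 * sw 0 3 * sw 0 2, sw 0 1 * sw 0 3, sw 1 3]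
def bp3 : List (Equiv.Perm (Fin 4)) := [1, sw 0 2, sw 0 2 * sw 0 1, sw 1 2, sw 0 1 * sw 0 2, sw 0 1 * sw 0 2 * sw 0 3, sw 1 2 * sw 1 3, sw 0 2 * sw 0 3 * sw 0 1, sw 0 2 * sw 0 3, sw 2 3, sw 0 1 * sw 2 3, sw 0 1 * sw 0 3 * sw 0 2, sw 1 3 * sw 1 2, sw 0 2 * sw 0 1 * sw 0 3, sw 0 2 * sw 1 3, sw 0 3 * sw 0 1 * sw 0 2, sw 0 3 * sw 1 2, sw 0 3 * sw 0 2 * sw 0 1, sw 0 3 * sw 0 2, sw 0 3, sw 0 3 * sw 0 1, sw 1 3, sw 0 1 * sw 0 3, sw 0 1]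
def bp4 : List (Equiv.Perm (Fin 4)) := [1, sw 0 1, sw 0 1 * sw 0 2, sw 1 2, sw 0 2 * sw 0 1, sw 0 2, sw 0 2 * sw 0 3, sw 0 2 * sw 0 3 * sw 0 1, sw 1 2 * sw 1 3, sw 0 1 * sw 0 2 * sw 0 3, sw 0 1 * sw 2 3, sw 2 3, sw 0 3 * sw 0 2, sw 0 3, sw 0 3 * sw 0 1, sw 0 3 * sw 0 1 * sw 0 2, sw 0 3 * sw 1 2, sw 0 2 * sw 0 1 * sw 0 3, sw 0 2 * sw 1 3, sw 1 3, sw 0 1 * sw 0 3, sw 0 1 * sw 0 3 * sw 0 2, sw 1 3 * sw 1 2, sw 0 3 * sw 0 2 * sw 0 1]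
def bp5 : List (Equiv.Perm (Fin 4)) := [1, sw 0 1, sw 0 1 * sw 0 2, sw 1 2, sw 0 2 * sw 0 1, sw 0 2, sw 0 2 * sw 0 3, sw 2 3, sw 0 1 * sw 2 3, sw 0 1 * sw 0 2 * sw 0 3, sw 1 2 * sw 1 3, sw 0 3 * sw 0 1 * sw 0 2, sw 0 3 * sw 1 2, sw 0 3 * sw 0 2 * sw 0 1, sw 0 3 * sw 0 2, sw 0 3, sw 0 3 * sw 0 1, sw 1 3, sw 0 1 * sw 0 3, sw 0 1 * sw 0 3 * sw 0 2, sw 1 3 * sw 1 2, sw 0 2 * sw 0 1 * sw 0 3, sw 0 2 * sw 1 3, sw 0 2 * sw 0 3 * sw 0 1]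
def bp6 : List (Equiv.Perm (Fin 4)) := [1, sw 0 1, sw 0 1 * sw 0 2, sw 1 2, sw 0 2 * sw 0 1, sw 0 2, sw 0 2 * sw 0 3, sw 0 2 * sw 0 3 * sw 0 1, sw 1 2 * sw 1 3, sw 0 1 * sw 0 2 * sw 0 3, sw 0 1 * sw 2 3, sw 2 3, sw 0 3 * sw 0 2, sw 0 3 * sw 0 2 * sw 0 1, sw 0 3 * sw 1 2, sw 0 3, sw 0 3 * sw 0 1, sw 0 3 * sw 0 1 * sw 0 2, sw 0 2 * sw 1 3, sw 0 2 * sw 0 1 * sw 0 3, sw 1 3 * sw 1 2, sw 1 3, sw 0 1 * sw 0 3, sw 0 1 * sw 0 3 * sw 0 2]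
def bp7 : List (Equiv.Perm (Fin 4)) := [1, sw 0 1, sw 0 1 * sw 0 2, sw 1 2, sw 0 2 * sw 0 1, sw 0 2 * sw 0 1 * sw 0 3, sw 0 2 * sw 1 3, sw 1 3, sw 0 1 * sw 0 3, sw 0 1 * sw 0 3 * sw 0 2, sw 1 3 * sw 1 2, sw 0 3 * sw 0 2 * sw 0 1, sw 0 3 * sw 0 2, sw 0 3, sw 0 3 * sw 1 2, sw 0 3 * sw 0 1 * sw 0 2, sw 0 3 * sw 0 1, sw 0 2 * sw 0 3 * sw 0 1, sw 1 2 * sw 1 3, sw 0 1 * sw 0 2 * sw 0 3, sw 0 1 * sw 2 3, sw 2 3, sw 0 2 * sw 0 3, sw 0 2]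
def bp8 : List (Equiv.Perm (Fin 4)) := [1, sw 0 1, sw 0 1 * sw 0 2, sw 1 2, sw 0 2 * sw 0 1, sw 0 2, sw 0 2 * sw 0 3, sw 0 2 * sw 0 3 * sw 0 1, sw 1 2 * sw 1 3, sw 0 1 * sw 0 2 * sw 0 3, sw 0 1 * sw 2 3, sw 2 3, sw 0 3 * sw 0 2, sw 0 3 * sw 0 2 * sw 0 1, sw 0 3 * sw 1 2, sw 0 3, sw 0 3 * sw 0 1, sw 1 3, sw 0 1 * sw 0 3, sw 0 1 * sw 0 3 * sw 0 2, sw 1 3 * sw 1 2, sw 0 2 * sw 0 1 * sw 0 3, sw 0 2 * sw 1 3, sw 0 3 * sw 0 1 * sw 0 2]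
def bp9 : List (Equiv.Perm (Fin 4)) := [1, sw 0 1, sw 0 1 * sw 0 2, sw 1 2, sw 0 2 * sw 0 1, sw 0 2, sw 0 2 * sw 0 3, sw 0 2 * sw 0 3 * sw 0 1, sw 1 2 * sw 1 3, sw 0 3 * sw 0 1 * sw 0 2, sw 0 3 * sw 1 2, sw 0 3 * sw 0 2 * sw 0 1, sw 1 3 * sw 1 2, sw 0 1 * sw 0 3 * sw 0 2, sw 0 1 * sw 0 3, sw 0 2 * sw 0 1 * sw 0 3, sw 0 2 * sw 1 3, sw 1 3, sw 0 3 * sw 0 1, sw 0 3, sw 0 3 * sw 0 2, sw 2 3, sw 0 1 * sw 2 3, sw 0 1 * sw 0 2 * sw 0 3]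
def bp10 : List (Equiv.Perm (Fin 4)) := [1, sw 0 1, sw 0 1 * sw 0 2, sw 1 2, sw 0 2 * sw 0 1, sw 0 2, sw 0 2 * sw 0 3, sw 0 2 * sw 0 3 * sw 0 1, sw 1 2 * sw 1 3, sw 0 1 * sw 0 2 * sw 0 3, sw 0 1 * sw 2 3, sw 2 3, sw 0 3 * sw 0 2, sw 0 3 * sw 0 2 * sw 0 1, sw 0 3 * sw 1 2, sw 0 3 * sw 0 1 * sw 0 2, sw 0 2 * sw 1 3, sw 0 2 * sw 0 1 * sw 0 3, sw 1 3 * sw 1 2, sw 0 1 * sw 0 3 * sw 0 2, sw 0 1 * sw 0 3, sw 1 3, sw 0 3 * sw 0 1, sw 0 3]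
def bp11 : List (Equiv.Perm (Fin 4)) := [1, sw 0 1, sw 0 1 * sw 0 2, sw 1 2, sw 0 2 * sw 0 1, sw 0 2, sw 0 2 * sw 0 3, sw 0 2 * sw 0 3 * sw 0 1, sw 1 2 * sw 1 3, sw 0 1 * sw 0 2 * sw 0 3, sw 0 1 * sw 2 3, sw 2 3, sw 0 3 * sw 0 2, sw 0 3 * sw 0 2 * sw 0 1, sw 0 3 * sw 1 2, sw 0 3, sw 0 3 * sw 0 1, sw 0 3 * sw 0 1 * sw 0 2, sw 0 2 * sw 1 3, sw 1 3, sw 0 1 * sw 0 3, sw 0 1 * sw 0 3 * sw 0 2, sw 1 3 * sw 1 2, sw 0 2 * sw 0 1 * sw 0 3]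
def oddTargets : List (Equiv.Perm (Fin 4)) := [sw 2 3, sw 1 2, sw 1 3, sw 0 1, sw 0 3 * sw 0 2 * sw 0 1, sw 0 2 * sw 0 3 * sw 0 1, sw 0 1 * sw 0 3 * sw 0 2, sw 0 2, sw 0 3 * sw 0 1 * sw 0 2, sw 0 1 * sw 0 2 * sw 0 3, sw 0 3, sw 0 2 * sw 0 1 * sw 0 3]
def evenPerms : List (Equiv.Perm (Fin 4)) := [1, sw 1 3 * sw 1 2, sw 1 2 * sw 1 3, sw 0 1 * sw 2 3, sw 0 2 * sw 0 1, sw 0 3 * sw 0 1, sw 0 1 * sw 0 2, sw 0 3 * sw 0 2, sw 0 2 * sw 1 3, sw 0 1 * sw 0 3, sw 0 2 * sw 0 3, sw 0 3 * sw 1 2]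

lemma mem_odd : ∀ w : Equiv.Perm (Fin 4), Equiv.Perm.sign w = -1 → w ∈ oddTargets := by
  decide

end BSH

namespace BSH
open List Equiv Equiv.Perm

set_option maxHeartbeats 1000000 in
lemma hlbp0 : HL (BS 4) Set.univ 1 (sw 2 3) bp0 :=
  ofChecks _ _ _ (by decide) (by decide) rfl rfl rfl

set_option maxHeartbeats 1000000 in
lemma hlbp1 : HL (BS 4) Set.univ 1 (sw 1 2) bp1 :=
  ofChecks _ _ _ (by decide) (by decide) rfl rfl rfl

set_option maxHeartbeats 1000000 in
lemma hlbp2 : HL (BS 4) Set.univ 1 (sw 1 3) bp2 :=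
  ofChecks _ _ _ (by decide) (by decide) rfl rfl rfl

set_option maxHeartbeats 1000000 in
lemma hlbp3 : HL (BS 4) Set.univ 1 (sw 0 1) bp3 :=
  ofChecks _ _ _ (by decide) (by decide) rfl rfl rfl

set_option maxHeartbeats 1000000 in
lemma hlbp4 : HL (BS 4) Set.univ 1 (sw 0 3 * sw 0 2 * sw 0 1) bp4 :=
  ofChecks _ _ _ (by decide) (by decide) rfl rfl rfl

set_option maxHeartbeats 1000000 in
lemma hlbp5 : HL (BS 4) Set.univ 1 (sw 0 2 * sw 0 3 * sw 0 1) bp5 :=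
  ofChecks _ _ _ (by decide) (by decide) rfl rfl rfl

set_option maxHeartbeats 1000000 in
lemma hlbp6 : HL (BS 4) Set.univ 1 (sw 0 1 * sw 0 3 * sw 0 2) bp6 :=
  ofChecks _ _ _ (by decide) (by decide) rfl rfl rfl

set_option maxHeartbeats 1000000 in
lemma hlbp7 : HL (BS 4) Set.univ 1 (sw 0 2) bp7 :=
  ofChecks _ _ _ (by decide) (by decide) rfl rfl rfl

set_option maxHeartbeats 1000000 in
lemma hlbp8 : HL (BS 4) Set.univ 1 (sw 0 3 * sw 0 1 * sw 0 2) bp8 :=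
  ofChecks _ _ _ (by decide) (by decide) rfl rfl rfl

set_option maxHeartbeats 1000000 in
lemma hlbp9 : HL (BS 4) Set.univ 1 (sw 0 1 * sw 0 2 * sw 0 3) bp9 :=
  ofChecks _ _ _ (by decide) (by decide) rfl rfl rfl

set_option maxHeartbeats 1000000 in
lemma hlbp10 : HL (BS 4) Set.univ 1 (sw 0 3) bp10 :=
  ofChecks _ _ _ (by decide) (by decide) rfl rfl rfl

set_option maxHeartbeats 1000000 in
lemma hlbp11 : HL (BS 4) Set.univ 1 (sw 0 2 * sw 0 1 * sw 0 3) bp11 :=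
  ofChecks _ _ _ (by decide) (by decide) rfl rfl rfl

lemma base4 : Ham 4 := by
  intro u v hs
  have hsv : Equiv.Perm.sign (u⁻¹ * v) = -1 := by
    rw [Equiv.Perm.sign_mul, Equiv.Perm.sign_inv]
    rw [units_eq_neg_of_ne hs]
    rcases Int.units_eq_one_or (Equiv.Perm.sign u) with h' | h' <;> rw [h'] <;> decide
  have hmem : u⁻¹ * v ∈ oddTargets := mem_odd _ hsv
  have hv : v = u * (u⁻¹ * v) := by group
  rw [hv]
  simp only [oddTargets, List.mem_cons, List.not_mem_nil, or_false] at hmem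

  rcases hmem with hmem|hmem|hmem|hmem|hmem|hmem|hmem|hmem|hmem|hmem|hmem|hmem

  · rw [hmem]
    have h := HL.translate (g := u) hlbp0
    rw [mul_one] at h
    exact ⟨_, h⟩
  · rw [hmem]
    have h := HL.translate (g := u) hlbp1
    rw [mul_one] at h
    exact ⟨_, h⟩
  · rw [hmem]
    have h := HL.translate (g := u) hlbp2
    rw [mul_one] at h
    exact ⟨_, h⟩
  · rw [hmem]
    have h := HL.translate (g := u) hlbp3
    rw [mul_one] at h
    exact ⟨_, h⟩
  · rw [hmem]
    have h := HL.translate (g := u) hlbp4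
    rw [mul_one] at h
    exact ⟨_, h⟩
  · rw [hmem]
    have h := HL.translate (g := u) hlbp5
    rw [mul_one] at h
    exact ⟨_, h⟩
  · rw [hmem]
    have h := HL.translate (g := u) hlbp6
    rw [mul_one] at h
    exact ⟨_, h⟩
  · rw [hmem]
    have h := HL.translate (g := u) hlbp7
    rw [mul_one] at h
    exact ⟨_, h⟩
  · rw [hmem]
    have h := HL.translate (g := u) hlbp8
    rw [mul_one] at h
    exact ⟨_, h⟩
  · rw [hmem]
    have h := HL.translate (g := u) hlbp9
    rw [mul_one] at h
    exact ⟨_, h⟩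
  · rw [hmem]
    have h := HL.translate (g := u) hlbp10
    rw [mul_one] at h
    exact ⟨_, h⟩
  · rw [hmem]
    have h := HL.translate (g := u) hlbp11
    rw [mul_one] at h
    exact ⟨_, h⟩
end BSH

namespace BSH

lemma main_ham : ∀ n, 4 ≤ n → Ham n := by
  intro n hn
  induction n, hn using Nat.le_induction with
  | base => exact base4
  | succ n hn ih => exact step hn ih

end BSH

/-- For every `n ≥ 4` and any two vertices `u, v` of `BS_n` lying in distinct
bipartition classes (permutations of opposite parity), there exists a Hamiltonian
path of `BS_n` from `u` to `v`. -/
theorem bubbleSortStar_hamiltonian_path (n : ℕ) (hn : 4 ≤ n)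
    (u v : Equiv.Perm (Fin n)) (hpar : Equiv.Perm.sign u ≠ Equiv.Perm.sign v) :
    ∃ p : (BS n).Walk u v, p.IsHamiltonian := by
  obtain ⟨l, hl⟩ := BSH.main_ham n hn u v hpar
  exact BSH.ham_of_HL hl
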